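/- Let X ⊆ X' with X, X' ∈ 𝓘, let i ∉ X' be such that X' ∪ {i} ∈ 𝓘, and let r' ≤ r be natural numbers with |X' ∪ {i}| ≤ r'. Then f_r(X) − f_r(X ∪ {i}) ≤ f_{r'}(X') − f_{r'}(X' ∪ {i}). (Consequently, the trade prices p_{i,j}(X, r) used in the strongly budget-balanced matroid mechanism, which are proportional to the expectation of f_r(X) − f_r(X ∪ {i}) plus a term independent of X and r, are non-decreasing as X grows and r shrinks.) -/

import Mathlib

open Finset

/-- `Y` is feasible for `(X, r)`: it is disjoint from `X`, `X ∪ Y` is independent in the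
matroid `M`, and `|X ∪ Y| ≤ r`. -/
def MatroidFeasible {α : Type*} [DecidableEq α] (M : Matroid α) (r : ℕ)
    (X Y : Finset α) : Prop :=
  Disjoint X Y ∧ M.Indep ↑(X ∪ Y) ∧ (X ∪ Y).card ≤ r

/-- `truncOpt M w r X = f_r(X)`: the maximum weight `w(Y)` over all sets `Y` feasible for
`(X, r)`, i.e. the weight of a maximum-weight basis of the matroid contracted by `X` and
truncated at rank `r`. -/
noncomputable def truncOpt {α : Type*} [DecidableEq α] (M : Matroid α) (w : α → ℝ)
    (r : ℕ) (X : Finset α) : ℝ :=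
  sSup {t : ℝ | ∃ Y : Finset α, MatroidFeasible M r X Y ∧ t = ∑ e ∈ Y, w e}

lemma truncOpt_set_finite {α : Type*} [DecidableEq α] [Fintype α] (M : Matroid α)
    (w : α → ℝ) (r : ℕ) (X : Finset α) :
    {t : ℝ | ∃ Y : Finset α, MatroidFeasible M r X Y ∧ t = ∑ e ∈ Y, w e}.Finite := by
  apply (Set.finite_range (fun Y : Finset α => ∑ e ∈ Y, w e)).subset
  rintro t ⟨Y, -, rfl⟩
  exact ⟨Y, rfl⟩

lemma le_truncOpt {α : Type*} [DecidableEq α] [Fintype α] {M : Matroid α}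
    {w : α → ℝ} {r : ℕ} {X Y : Finset α} (h : MatroidFeasible M r X Y) :
    ∑ e ∈ Y, w e ≤ truncOpt M w r X :=
  le_csSup (truncOpt_set_finite M w r X).bddAbove ⟨Y, h, rfl⟩

lemma exists_truncOpt {α : Type*} [DecidableEq α] [Fintype α] {M : Matroid α}
    (w : α → ℝ) {r : ℕ} {X : Finset α} (hX : M.Indep ↑X) (hr : X.card ≤ r) :
    ∃ Y, MatroidFeasible M r X Y ∧ truncOpt M w r X = ∑ e ∈ Y, w e := by
  have hne : {t : ℝ | ∃ Y : Finset α, MatroidFeasible M r X Y ∧ t = ∑ e ∈ Y, w e}.Nonempty :=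
    ⟨0, ∅, ⟨Finset.disjoint_empty_right X, by simpa using hX, by simpa using hr⟩, by simp⟩
  obtain ⟨Y, hY, ht⟩ := hne.csSup_mem (truncOpt_set_finite M w r X)
  exact ⟨Y, hY, ht⟩

/-- Monotonicity of the marginal loss both in the contracted set and in the rank:
for independent `X ⊆ X'`, `i ∉ X'` with `X' ∪ {i}` independent and `|X' ∪ {i}| ≤ r' ≤ r`,
we have `f_r(X) − f_r(X ∪ {i}) ≤ f_{r'}(X') − f_{r'}(X' ∪ {i})`.  (Hence the trade prices
of the strongly budget-balanced matroid mechanism are non-decreasing as `X` grows and `r`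
shrinks.) -/
theorem truncOpt_marginal_loss_mono
    {α : Type*} [DecidableEq α] [Fintype α] (M : Matroid α) (w : α → ℝ)
    (hw : ∀ e, 0 ≤ w e) (r r' : ℕ) (hrr : r' ≤ r)
    (X X' : Finset α) (hXX : X ⊆ X') (hX : M.Indep ↑X) (hX' : M.Indep ↑X')
    (i : α) (hiX' : i ∉ X') (hX'i : M.Indep ↑(insert i X'))
    (hcard : (insert i X').card ≤ r') :
    truncOpt M w r X - truncOpt M w r (insert i X) ≤
      truncOpt M w r' X' - truncOpt M w r' (insert i X') := by
  classical
  have hiX : i ∉ X := fun h => hiX' (hXX h)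
  have hXX'c : X.card ≤ X'.card := card_le_card hXX
  have hX'c1 : X'.card + 1 ≤ r' := by
    rwa [card_insert_of_notMem hiX'] at hcard
  have hXc : X.card ≤ r := by omega
  obtain ⟨Y, ⟨hYd, hYi, hYc⟩, hYv⟩ := exists_truncOpt w hX hXc
  obtain ⟨Z, ⟨hZd, hZi, hZc⟩, hZv⟩ := exists_truncOpt w hX'i (le_trans hcard le_rfl)
  rw [hYv, hZv]
  have hiZ : i ∉ Z := Finset.disjoint_left.mp hZd (mem_insert_self i X')
  have hX'Z : Disjoint X' Z := Finset.disjoint_of_subset_left (subset_insert i X') hZd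
  have hiXZ' : i ∉ X' ∪ Z := by simp [hiX', hiZ]
  have hBeq : insert i X' ∪ Z = insert i (X' ∪ Z) := insert_union i X' Z
  have hDi : M.Indep ↑(X' ∪ Z) := by
    apply hZi.subset
    rw [hBeq]
    exact_mod_cast Finset.coe_subset.mpr (subset_insert i (X' ∪ Z))
  have hDcard : (X' ∪ Z).card + 1 ≤ r' := by
    rw [hBeq, card_insert_of_notMem hiXZ'] at hZc
    omega
  have hAE : (↑(X ∪ Y) : Set α) ⊆ M.E := hYi.subset_ground
  have hiE : i ∈ M.E := hX'i.subset_ground (by simp)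
  by_cases hiY : i ∈ Y
  · -- Case 1 : i ∈ Y
    have hfeas1 : MatroidFeasible M r (insert i X) (Y.erase i) := by
      have hset : insert i X ∪ Y.erase i = X ∪ Y := by
        ext a
        by_cases hai : a = i <;> simp [hai, hiY, mem_erase] <;> tauto
      refine ⟨?_, by rwa [hset], by rwa [hset]⟩
      rw [Finset.disjoint_left]
      intro a ha
      rcases mem_insert.mp ha with rfl | haX
      · exact notMem_erase a Y
      · exact fun hmem => Finset.disjoint_left.mp hYd haX (mem_of_mem_erase hmem)
    have hfeas2 : MatroidFeasible M r' X' (insert i Z) := by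
      have hset : X' ∪ insert i Z = insert i X' ∪ Z := by
        rw [union_insert, hBeq]
      refine ⟨?_, by rwa [hset], by rwa [hset]⟩
      rw [Finset.disjoint_right]
      intro a ha
      rcases mem_insert.mp ha with rfl | haZ
      · exact hiX'
      · exact fun hmem => Finset.disjoint_left.mp hX'Z hmem haZ
    have h1 := le_truncOpt (w := w) hfeas1
    have h2 := le_truncOpt (w := w) hfeas2
    have hs1 : ∑ x ∈ Y.erase i, w x + w i = ∑ x ∈ Y, w x := Finset.sum_erase_add Y w hiY
    have hs2 : ∑ x ∈ insert i Z, w x = w i + ∑ x ∈ Z, w x := Finset.sum_insert hiZ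
    linarith
  · -- i ∉ Y
    have hiA : i ∉ X ∪ Y := by simp [hiX, hiY]
    by_cases hcase : M.Indep (insert i (↑(X ∪ Y) : Set α)) ∧ (X ∪ Y).card < r
    · -- Case 2a
      have hfeas1 : MatroidFeasible M r (insert i X) Y := by
        refine ⟨?_, ?_, ?_⟩
        · rw [Finset.disjoint_left]
          intro a ha
          rcases mem_insert.mp ha with rfl | haX
          · exact hiY
          · exact fun hmem => Finset.disjoint_left.mp hYd haX hmem
        · rw [insert_union, coe_insert]
          exact hcase.1
        · rw [insert_union, card_insert_of_notMem hiA]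
          omega
      have hfeas2 : MatroidFeasible M r' X' Z :=
        ⟨hX'Z, hDi, by omega⟩
      have h1 := le_truncOpt (w := w) hfeas1
      have h2 := le_truncOpt (w := w) hfeas2
      linarith
    · -- Cases 2b/2c : find an exchange element e
      obtain ⟨e, heY, heD, h1, h2⟩ : ∃ e, e ∈ Y ∧ e ∉ X' ∪ Z ∧
          M.Indep (insert e (↑(X' ∪ Z) : Set α)) ∧
          M.Indep (insert i ((↑(X ∪ Y) : Set α) \ {e})) := by
        by_cases hind : M.Indep (insert i (↑(X ∪ Y) : Set α))
        · -- Case 2c : cardinality exchange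
          have hAr : r ≤ (X ∪ Y).card := by
            by_contra hlt
            exact hcase ⟨hind, by omega⟩
          have hlt : ((X' ∪ Z : Finset α) : Set α).encard < ((X ∪ Y : Finset α) : Set α).encard := by
            rw [Set.encard_coe_eq_coe_finsetCard, Set.encard_coe_eq_coe_finsetCard]
            exact_mod_cast (show (X' ∪ Z).card < (X ∪ Y).card by omega)
          obtain ⟨e, he, hins⟩ := hDi.augment hYi hlt
          have heA : e ∈ X ∪ Y := by exact_mod_cast he.1
          have heD : e ∉ X' ∪ Z := fun h => he.2 (by exact_mod_cast h)
          have heX' : e ∉ X' := fun h => heD (mem_union_left _ h)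
          have heY : e ∈ Y := by
            rcases mem_union.mp heA with h | h
            · exact absurd (hXX h) heX'
            · exact h
          refine ⟨e, heY, heD, hins, hind.subset ?_⟩
          exact Set.insert_subset_insert Set.diff_subset
        · -- Case 2b : circuit exchange
          have hicl : i ∈ M.closure ↑(X ∪ Y) := by
            rw [hYi.mem_closure_iff_of_notMem (by exact_mod_cast hiA)]
            exact ⟨hind, Set.insert_subset hiE hAE⟩
          obtain ⟨C0, hC0mem, hC0min⟩ := Finset.exists_min_image
            ((X ∪ Y).powerset.filter fun C : Finset α => i ∈ M.closure ↑C) Finset.card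
            ⟨X ∪ Y, by
              simp only [mem_filter, mem_powerset]
              exact ⟨Finset.Subset.refl _, hicl⟩⟩
          simp only [mem_filter, mem_powerset] at hC0mem
          obtain ⟨hC0A, hC0cl⟩ := hC0mem
          have hiDindep : M.Indep (insert i (↑(X' ∪ Z) : Set α)) := by
            have := hZi
            rw [hBeq, coe_insert] at this
            exact this
          have hst : ¬ (↑C0 : Set α) ⊆ M.closure ↑(X' ∪ Z) := by
            intro hsub
            have hiD : i ∈ M.closure ↑(X' ∪ Z) :=
              M.closure_subset_closure_of_subset_closure hsub hC0cl
            exact ((hDi.notMem_closure_iff_of_notMem (by exact_mod_cast hiXZ') hiE).mpr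
              hiDindep) hiD
          obtain ⟨e, heC0, hecl⟩ := Set.not_subset.mp hst
          have heC0' : e ∈ C0 := by exact_mod_cast heC0
          have heA : e ∈ X ∪ Y := hC0A heC0'
          have heE : e ∈ M.E := hAE (by exact_mod_cast heA)
          have heD : e ∉ X' ∪ Z :=
            fun h => hecl (M.subset_closure _ hDi.subset_ground (by exact_mod_cast h))
          have h1 : M.Indep (insert e (↑(X' ∪ Z) : Set α)) := by
            rw [← hDi.notMem_closure_iff_of_notMem (by exact_mod_cast heD) heE]
            exact hecl
          have heX' : e ∉ X' := fun h => heD (mem_union_left _ h)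
          have heY : e ∈ Y := by
            rcases mem_union.mp heA with h | h
            · exact absurd (hXX h) heX'
            · exact h
          have h2 : M.Indep (insert i ((↑(X ∪ Y) : Set α) \ {e})) := by
            by_contra h2n
            have hAe : M.Indep ((↑(X ∪ Y) : Set α) \ {e}) := hYi.subset Set.diff_subset
            have hiAe : i ∉ (↑(X ∪ Y) : Set α) \ {e} := by
              intro h
              exact hiA (by exact_mod_cast h.1)
            have hi2 : i ∈ M.closure ((↑(X ∪ Y) : Set α) \ {e}) := by
              rw [hAe.mem_closure_iff_of_notMem hiAe]
              exact ⟨h2n, Set.insert_subset hiE (Set.diff_subset.trans hAE)⟩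
            have hno : i ∉ M.closure ↑(C0.erase e) := by
              intro hmem
              have hmin := hC0min (C0.erase e)
                (by
                  simp only [mem_filter, mem_powerset]
                  exact ⟨(erase_subset e C0).trans hC0A, hmem⟩)
              have hce := card_erase_of_mem heC0'
              have hpos : 0 < C0.card := card_pos.mpr ⟨e, heC0'⟩
              omega
            have hex : i ∈ M.closure (insert e ↑(C0.erase e)) \ M.closure ↑(C0.erase e) := by
              refine ⟨?_, hno⟩
              rw [← coe_insert, insert_erase heC0']
              exact hC0cl
            have hexch := Matroid.closure_exchange hex
            have hsub2 : insert i (↑(C0.erase e) : Set α) ⊆ insert i ((↑(X ∪ Y) : Set α) \ {e}) := by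
              rw [coe_erase]
              exact Set.insert_subset_insert
                (Set.diff_subset_diff_left (by exact_mod_cast hC0A))
            have hecl2 : e ∈ M.closure (insert i ((↑(X ∪ Y) : Set α) \ {e})) :=
              M.closure_subset_closure hsub2 hexch.1
            rw [Matroid.closure_insert_eq_of_mem_closure hi2] at hecl2
            exact hYi.notMem_closure_sdiff_of_mem (by exact_mod_cast heA) hecl2
          exact ⟨e, heY, heD, h1, h2⟩
      -- common construction for cases 2b/2c
      have heX : e ∉ X := fun h => heD (mem_union_left _ (hXX h))
      have heX' : e ∉ X' := fun h => heD (mem_union_left _ h)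
      have heZ : e ∉ Z := fun h => heD (mem_union_right _ h)
      have heA : e ∈ X ∪ Y := mem_union_right _ heY
      have hei : e ≠ i := fun h => hiY (h ▸ heY)
      have hfeas1 : MatroidFeasible M r (insert i X) (Y.erase e) := by
        have hset : insert i X ∪ Y.erase e = insert i ((X ∪ Y).erase e) := by
          ext a
          by_cases hae : a = e <;> by_cases hai : a = i <;>
            simp [hae, hai, mem_erase, heX, hei, Ne.symm hei, hiX, hiY] <;> tauto
        refine ⟨?_, ?_, ?_⟩
        · rw [Finset.disjoint_left]
          intro a ha
          rcases mem_insert.mp ha with rfl | haX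
          · exact fun hmem => hiY (mem_of_mem_erase hmem)
          · exact fun hmem => Finset.disjoint_left.mp hYd haX (mem_of_mem_erase hmem)
        · rw [hset, coe_insert, coe_erase]
          exact h2
        · rw [hset, card_insert_of_notMem (fun h => hiA (mem_of_mem_erase h)),
            card_erase_of_mem heA]
          have hpos : 0 < (X ∪ Y).card := card_pos.mpr ⟨e, heA⟩
          omega
      have hfeas2 : MatroidFeasible M r' X' (insert e Z) := by
        refine ⟨?_, ?_, ?_⟩
        · rw [Finset.disjoint_right]
          intro a ha
          rcases mem_insert.mp ha with rfl | haZ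
          · exact heX'
          · exact fun hmem => Finset.disjoint_left.mp hX'Z hmem haZ
        · rw [union_insert, coe_insert]
          exact h1
        · rw [union_insert, card_insert_of_notMem heD]
          omega
      have hle1 := le_truncOpt (w := w) hfeas1
      have hle2 := le_truncOpt (w := w) hfeas2
      have hs1 : ∑ x ∈ Y.erase e, w x + w e = ∑ x ∈ Y, w x := Finset.sum_erase_add Y w heY
      have hs2 : ∑ x ∈ insert e Z, w x = w e + ∑ x ∈ Z, w x := Finset.sum_insert heZ
      linarith
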